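/- arXiv:1803.01834 — 2 statements merged into one kernel-verified Lean document; each statement's English description precedes it below -/
import Mathlib

section
/- For a layer-wise squared loss L_{n-1}(z, y) = (1/2)‖z − y‖², if the target for layer n−1 is set as y^{n-1} = z^{n-1} − ∇_{z^{n-1}} L_n(z^n, t), where z^n is a differentiable function of z^{n-1}, then for any parameter vector w on which z^{n-1} depends differentiably, the gradient of L_{n-1}(z^{n-1}, y^{n-1}) with respect to w (treating y^{n-1} as a constant) equals the gradient of L_n(z^n, t) with respect to w. -/
open InnerProductSpace

/-- Base case of backprop-as-targetprop. With squared layerwise loss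
`L_{n-1}(z,y) = (1/2)‖z-y‖²` and target `y^{n-1} = z^{n-1}(w₀) - ∇_{z} L_n(z^n(z), t)` evaluated
at the current feedforward value, the gradient w.r.t. the parameters `w` of the layerwise loss
(with the target held constant) equals the gradient of the top loss w.r.t. `w`. -/
theorem lra_backprop_base_case
    {p d m : ℕ}
    (z1 : EuclideanSpace ℝ (Fin p) → EuclideanSpace ℝ (Fin d))
    (z2 : EuclideanSpace ℝ (Fin d) → EuclideanSpace ℝ (Fin m))
    (t : EuclideanSpace ℝ (Fin m))
    (Ln : EuclideanSpace ℝ (Fin m) → EuclideanSpace ℝ (Fin m) → ℝ)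
    (w₀ : EuclideanSpace ℝ (Fin p))
    (hz1 : DifferentiableAt ℝ z1 w₀)
    (hG : DifferentiableAt ℝ (fun u => Ln (z2 u) t) (z1 w₀))
    (y : EuclideanSpace ℝ (Fin d))
    (hy : y = z1 w₀ - gradient (fun u => Ln (z2 u) t) (z1 w₀)) :
    gradient (fun w => (1/2 : ℝ) * ‖z1 w - y‖ ^ 2) w₀
      = gradient (fun w => Ln (z2 (z1 w)) t) w₀ := by
  set g := gradient (fun u => Ln (z2 u) t) (z1 w₀) with hg
  set A := fderiv ℝ z1 w₀ with hA
  have hv : z1 w₀ - y = g := by rw [hy]; abel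
  -- RHS
  have hGrad : HasGradientAt (fun u => Ln (z2 u) t) g (z1 w₀) := hG.hasGradientAt
  have hRHS : HasFDerivAt (fun w => Ln (z2 (z1 w)) t)
      ((toDual ℝ _ g).comp A) w₀ :=
    hGrad.hasFDerivAt.comp w₀ hz1.hasFDerivAt
  -- LHS
  have hsub : HasFDerivAt (fun w => z1 w - y) A w₀ := hz1.hasFDerivAt.sub_const y
  have hinner := ((hsub.inner ℝ hsub).const_mul (1/2 : ℝ))
  have hLHS : HasFDerivAt (fun w => (1/2 : ℝ) * ‖z1 w - y‖ ^ 2)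
      ((toDual ℝ _ g).comp A) w₀ := by
    have heq : (fun w => (1/2 : ℝ) * ‖z1 w - y‖ ^ 2)
        = fun w => (1/2 : ℝ) * (inner ℝ (z1 w - y) (z1 w - y) : ℝ) := by
      funext w; rw [real_inner_self_eq_norm_sq]
    rw [heq]
    refine hinner.congr_fderiv ?_
    symm
    ext v
    simp [hv, real_inner_comm]
    ring
  rw [hLHS.hasGradientAt.gradient, hRHS.hasGradientAt.gradient]
end

section
/- Inductive step of the backprop-as-targetprop equivalence: suppose for layer k the layerwise loss L_k(z^k, y^k) with y^k held fixed satisfies ∇_w L_k(z^k, y^k) = ∇_w L_n(z^n, t) for all parameters w of layers below k. If the target for layer k−1 is set as y^{k-1} = z^{k-1} − ∇_{z^{k-1}} L_k(z^k, y^k), then ∇_w L_{k-1}(z^{k-1}, y^{k-1}) = ∇_w L_n(z^n, t), where L_{k-1}(z,y) = (1/2)‖z − y‖² and y^{k-1} is held fixed. -/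
open InnerProductSpace

/-- Gradient of `w ↦ (1/2)‖f w - c‖²` at `w₀` equals the adjoint-style Fréchet derivative
`(innerSL ℝ (f w₀ - c)).comp f'`, as a `HasFDerivAt` statement. -/
lemma half_norm_sq_hasFDerivAt {p d : ℕ}
    {f : EuclideanSpace ℝ (Fin p) → EuclideanSpace ℝ (Fin d)}
    {f' : EuclideanSpace ℝ (Fin p) →L[ℝ] EuclideanSpace ℝ (Fin d)}
    {w₀ : EuclideanSpace ℝ (Fin p)} (c : EuclideanSpace ℝ (Fin d))
    (hf : HasFDerivAt f f' w₀) :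
    HasFDerivAt (fun w => (1/2 : ℝ) * ‖f w - c‖ ^ 2)
      ((innerSL ℝ (f w₀ - c)).comp f') w₀ := by
  have h1 : HasFDerivAt (fun w => f w - c) f' w₀ := hf.sub_const c
  have h2 := h1.norm_sq
  have h3 := h2.const_mul (1/2 : ℝ)
  refine h3.congr_fderiv ?_
  ext v
  simp [two_smul, real_inner_comm]
  ring

/-- Inductive step of the backprop-as-targetprop equivalence. If the gradient of
the layer-`k` squared loss (with fixed target `yk`) w.r.t. the parameters equals the gradient of
the top-level loss `Ltop`, and the target for layer `k-1` is set as
`y^{k-1} = z^{k-1}(w₀) - ∇_{z^{k-1}} L_k(z^k, y^k)`, then the gradient of the layer-`(k-1)`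
squared loss (with `y^{k-1}` fixed) also equals the gradient of the top-level loss. -/
theorem lra_backprop_inductive_step
    {p d d' : ℕ}
    (zk1 : EuclideanSpace ℝ (Fin p) → EuclideanSpace ℝ (Fin d))
    (zk : EuclideanSpace ℝ (Fin d) → EuclideanSpace ℝ (Fin d'))
    (yk : EuclideanSpace ℝ (Fin d'))
    (Ltop : EuclideanSpace ℝ (Fin p) → ℝ)
    (w₀ : EuclideanSpace ℝ (Fin p))
    (hzk1 : DifferentiableAt ℝ zk1 w₀)
    (hzk : DifferentiableAt ℝ zk (zk1 w₀))
    (hIH : gradient (fun w => (1/2 : ℝ) * ‖zk (zk1 w) - yk‖ ^ 2) w₀ = gradient Ltop w₀)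
    (yk1 : EuclideanSpace ℝ (Fin d))
    (hyk1 : yk1 = zk1 w₀ - gradient (fun u => (1/2 : ℝ) * ‖zk u - yk‖ ^ 2) (zk1 w₀)) :
    gradient (fun w => (1/2 : ℝ) * ‖zk1 w - yk1‖ ^ 2) w₀ = gradient Ltop w₀ := by
  set F : EuclideanSpace ℝ (Fin d) → ℝ := fun u => (1/2 : ℝ) * ‖zk u - yk‖ ^ 2 with hF
  set g : EuclideanSpace ℝ (Fin d) := gradient F (zk1 w₀) with hg
  -- F is differentiable at zk1 w₀
  have hFdiff : DifferentiableAt ℝ F (zk1 w₀) := by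
    exact ((hzk.sub_const yk).norm_sq ℝ).const_mul _
  have hFgrad : HasGradientAt F g (zk1 w₀) := hFdiff.hasGradientAt
  have hFfd : HasFDerivAt F (toDual ℝ _ g) (zk1 w₀) := hFgrad.hasFDerivAt
  -- derivative of the composite loss G
  have hGfd : HasFDerivAt (fun w => F (zk1 w))
      ((toDual ℝ _ g).comp (fderiv ℝ zk1 w₀)) w₀ :=
    hFfd.comp w₀ hzk1.hasFDerivAt
  -- derivative of the layer-(k-1) loss H
  have hzfd : HasFDerivAt zk1 (fderiv ℝ zk1 w₀) w₀ := hzk1.hasFDerivAt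
  have hHfd : HasFDerivAt (fun w => (1/2 : ℝ) * ‖zk1 w - yk1‖ ^ 2)
      ((innerSL ℝ (zk1 w₀ - yk1)).comp (fderiv ℝ zk1 w₀)) w₀ :=
    half_norm_sq_hasFDerivAt yk1 hzfd
  have hkey : zk1 w₀ - yk1 = g := by rw [hyk1]; abel
  have heq : (innerSL ℝ (zk1 w₀ - yk1)).comp (fderiv ℝ zk1 w₀)
      = (toDual ℝ _ g).comp (fderiv ℝ zk1 w₀) := by
    rw [hkey]; ext v; simp [toDual_apply_apply]
  rw [← hIH]
  rw [gradient, gradient, hGfd.fderiv, hHfd.fderiv, heq]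
end
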